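/- arXiv:1611.04175 — 7 statements merged into one kernel-verified Lean document; each statement's English description precedes it below -/
import Mathlib

section
/- If a profile P of pairwise distinct linear orders over a set of m candidates is single crossing with respect to a tree T (whose node set is the set of voters of P), then the number of preferences in P is at most C(m,2) + 1. -/
/-- `P u` and `P v` order the pair `(x,y)` differently. -/
def Crosses {V C : Type*} (P : V → C → C → Prop) (u v : V) (x y : C) : Prop :=
  ¬ (P u x y ↔ P v x y)

/-- A profile `P` indexed by the vertices of `G` is single crossing with respect to `G`:
for every pair of candidates, at most one edge of `G` separates the voters preferring
`x` over `y` from those preferring `y` over `x`. -/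
def SingleCrossingWrt {V C : Type*} (G : SimpleGraph V) (P : V → C → C → Prop) : Prop :=
  ∀ x y : C, ∀ u v u' v' : V, G.Adj u v → G.Adj u' v' →
    Crosses P u v x y → Crosses P u' v' x y → s(u, v) = s(u', v')

/-- The pairwise majority relation of three preferences. -/
def Maj3 {C : Type*} (p q r : C → C → Prop) : C → C → Prop := fun x y =>
  (p x y ∧ q x y) ∨ (p x y ∧ r x y) ∨ (q x y ∧ r x y)

/-- The triad majority property for a set of (strict) linear orders. -/
def TriadClosed {C : Type*} (Q : Set (C → C → Prop)) : Prop :=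
  ∀ p q r, p ∈ Q → q ∈ Q → r ∈ Q →
    IsStrictTotalOrder C (Maj3 p q r) ∧ Maj3 p q r ∈ Q

/-- The triad majority closure of a set of linear orders. -/
def triadClosure {C : Type*} (P : Set (C → C → Prop)) : Set (C → C → Prop) :=
  ⋂₀ {Q | P ⊆ Q ∧ (∀ p ∈ Q, IsStrictTotalOrder C p) ∧ TriadClosed Q}

/-- The connected component of `u` in `G − r`: vertices reachable from `u` by a walk
avoiding `r`. -/
def CompAvoid {V : Type*} (G : SimpleGraph V) (r u : V) : Set V :=
  {w | ∃ p : G.Walk u w, r ∉ p.support}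

/-- A set of linear orders is single crossing with respect to some tree. -/
def SCTreeSet {C : Type*} (Q : Set (C → C → Prop)) : Prop :=
  ∃ (V : Type) (_ : Fintype V) (G : SimpleGraph V) (f : V → C → C → Prop),
    G.IsTree ∧ (∀ v, IsStrictTotalOrder C (f v)) ∧ Set.range f = Q ∧
      SingleCrossingWrt G f

/-- a profile of pairwise distinct linear orders single crossing with respect
to a tree has at most `C(m,2) + 1` preferences. -/
theorem stmt_0 {V C : Type*} [Fintype V] [Fintype C] {G : SimpleGraph V}
    (hT : G.IsTree) (P : V → C → C → Prop)
    (hlin : ∀ v, IsStrictTotalOrder C (P v))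
    (hdist : Function.Injective P)
    (hsc : SingleCrossingWrt G P) :
    Fintype.card V ≤ (Fintype.card C).choose 2 + 1 := by
  classical
  -- flip lemma for strict total orders
  have flip : ∀ v : V, ∀ x y : C, x ≠ y → (P v x y ↔ ¬ P v y x) := by
    intro v x y hxy
    have h := hlin v
    constructor
    · intro h1 h2
      exact h.irrefl x (h.trans _ _ _ h1 h2)
    · intro h1
      rcases (show P v x y ∨ x = y ∨ P v y x by have := h.trichotomous x y; tauto) with h2 | rfl | h2
      · exact h2
      · exact absurd rfl hxy
      · exact absurd h2 h1
  have crosses_symmC : ∀ u v : V, ∀ x y : C, x ≠ y →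
      Crosses P u v x y → Crosses P u v y x := by
    intro u v x y hxy h hiff
    apply h
    rw [flip u x y hxy, flip v x y hxy, not_iff_not]
    exact hiff
  have crosses_symmV : ∀ u v : V, ∀ x y : C,
      Crosses P u v x y → Crosses P v u x y := fun u v x y h hiff => h hiff.symm
  -- each edge crosses some non-diagonal pair
  have key : ∀ e ∈ G.edgeSet, ∃ d : Sym2 C, ¬ d.IsDiag ∧
      ∀ u v x y, s(u, v) = e → s(x, y) = d → Crosses P u v x y := by
    intro e he
    induction e using Sym2.ind with
    | _ u₀ v₀ =>
      rw [SimpleGraph.mem_edgeSet] at he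
      have hPne : P u₀ ≠ P v₀ := fun h => G.ne_of_adj he (hdist h)
      have hex : ∃ x y, ¬ (P u₀ x y ↔ P v₀ x y) := by
        by_contra h
        push_neg at h
        exact hPne (funext fun x => funext fun y => propext (h x y))
      obtain ⟨x₀, y₀, hcr⟩ := hex
      have hxy : x₀ ≠ y₀ := by
        rintro rfl
        exact hcr (iff_of_false ((hlin u₀).irrefl x₀) ((hlin v₀).irrefl x₀))
      refine ⟨s(x₀, y₀), by simpa using hxy, ?_⟩
      intro u v x y huv hxy'
      rw [Sym2.eq_iff] at huv hxy'
      have hC : ∀ u v : V, (u = u₀ ∧ v = v₀) ∨ (u = v₀ ∧ v = u₀) →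
          Crosses P u v x₀ y₀ := by
        rintro u v (⟨rfl, rfl⟩ | ⟨rfl, rfl⟩)
        · exact hcr
        · exact crosses_symmV _ _ _ _ hcr
      rcases hxy' with ⟨rfl, rfl⟩ | ⟨rfl, rfl⟩
      · exact hC u v huv
      · exact crosses_symmC _ _ _ _ hxy (hC u v huv)
  -- the injective map from edges to pairs
  have hinj : ∃ F : G.edgeFinset → {d : Sym2 C // ¬ d.IsDiag}, Function.Injective F := by
    choose F hF1 hF2 using key
    refine ⟨fun e => ⟨F e.1 (SimpleGraph.mem_edgeFinset.mp e.2),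
      hF1 e.1 (SimpleGraph.mem_edgeFinset.mp e.2)⟩, ?_⟩
    rintro ⟨e, he⟩ ⟨e', he'⟩ heq
    simp only [Subtype.mk.injEq] at heq ⊢
    have he2 := SimpleGraph.mem_edgeFinset.mp he
    have he2' := SimpleGraph.mem_edgeFinset.mp he'
    induction e using Sym2.ind with
    | _ u v =>
    induction e' using Sym2.ind with
    | _ u' v' =>
    obtain ⟨x, y, hd⟩ : ∃ x y : C, F s(u, v) he2 = s(x, y) := by
      induction F s(u, v) he2 using Sym2.ind with
      | _ x y => exact ⟨x, y, rfl⟩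
    · have hadj : G.Adj u v := (SimpleGraph.mem_edgeSet G).mp he2
      have hadj' : G.Adj u' v' := (SimpleGraph.mem_edgeSet G).mp he2'
      have c1 : Crosses P u v x y := hF2 _ he2 u v x y rfl hd.symm
      have c2 : Crosses P u' v' x y := hF2 _ he2' u' v' x y rfl (hd.symm.trans heq)
      exact hsc x y u v u' v' hadj hadj' c1 c2
  obtain ⟨F, hF⟩ := hinj
  have hcard : G.edgeFinset.card ≤ (Fintype.card C).choose 2 := by
    rw [← Sym2.card_subtype_not_diag]
    convert (Fintype.card_coe _).symm.trans_le (Fintype.card_le_of_injective F hF)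
  have := hT.card_edgeFinset
  omega
end

section
/- Let P be a profile of pairwise distinct linear orders over m candidates which is single crossing with respect to a tree T. Then every node of T has degree at most m - 1. -/
section
open Classical in
/-- in a single crossing tree for a profile of pairwise distinct preferences,
every node has degree at most `m - 1`. -/
theorem stmt_1 {V C : Type*} [Fintype V] [Fintype C] {G : SimpleGraph V}
    [DecidableRel G.Adj]
    (hT : G.IsTree) (P : V → C → C → Prop)
    (hlin : ∀ v, IsStrictTotalOrder C (P v))
    (hdist : Function.Injective P)
    (hsc : SingleCrossingWrt G P) :
    ∀ v : V, G.degree v ≤ Fintype.card C - 1 := by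
  classical
  intro v
  haveI := hlin v
  letI : LinearOrder C := linearOrderOfSTO (P v)
  have hlt : ∀ a b : C, (a < b) = P v a b := fun a b => rfl
  letI : LocallyFiniteOrder C := Fintype.toLocallyFiniteOrder
  -- key: for each neighbor u, a covering pair of `P v` on which `P u` disagrees
  have key : ∀ u : V, G.Adj v u → ∃ a b : C, a ⋖ b ∧ P u b a := by
    intro u hadj
    have hne : P u ≠ P v := fun h => (G.ne_of_adj hadj).symm (hdist h)
    -- first get some disagreeing pair with a < b and P u b a
    have hex : ∃ a b : C, a < b ∧ P u b a := by
      by_contra hcon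
      push_neg at hcon
      apply hne
      funext a b
      apply propext
      constructor
      · intro h
        rcases trichotomous_of (P v) a b with h' | h' | h'
        · exact h'
        · subst h'
          exact absurd h fun hh => (hlin u).toIrrefl.irrefl _ hh
        · exact absurd h (hcon b a h')
      · intro h
        rcases trichotomous_of (P u) a b with h' | h' | h'
        · exact h'
        · subst h'
          exact absurd h fun hh => (hlin v).toIrrefl.irrefl _ hh
        · exact absurd h' (hcon a b h)
    obtain ⟨a0, b0, hab0, hba0⟩ := hex
    -- minimize the interval by strong induction on its card
    clear hne
    have H : ∀ n (a b : C), (Finset.Ioo a b).card = n → a < b → P u b a →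
        ∃ a b : C, a ⋖ b ∧ P u b a := by
      intro n
      induction n using Nat.strong_induction_on with
      | _ n ih =>
      intro a b hn hab hba
      by_cases hcov : a ⋖ b
      · exact ⟨a, b, hcov, hba⟩
      · have : ∃ c, a < c ∧ c < b := by
          by_contra hc
          push_neg at hc
          exact hcov ⟨hab, fun c h1 h2 => (show b ≤ c from hc c h1).not_gt h2⟩
        obtain ⟨c, hac, hcb⟩ := this
        rcases trichotomous_of (P u) c a with h' | h' | h'
        · -- P u c a : use pair (a, c)
          have hsub : (Finset.Ioo a c).card < n := by
            rw [← hn]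
            apply Finset.card_lt_card
            constructor
            · exact Finset.Ioo_subset_Ioo le_rfl hcb.le
            · intro hss
              have := hss (Finset.mem_Ioo.mpr ⟨hac, hcb⟩)
              exact (Finset.mem_Ioo.mp this).2.false
          exact ih _ hsub a c rfl hac h'
        · exact absurd hac (h' ▸ lt_irrefl a)
        · -- P u a c, with P u b a gives P u b c : use pair (c, b)
          have hbc : P u b c := (hlin u).toIsTrans.trans _ _ _ hba h'
          have hsub : (Finset.Ioo c b).card < n := by
            rw [← hn]
            apply Finset.card_lt_card
            constructor
            · exact Finset.Ioo_subset_Ioo hac.le le_rfl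
            · intro hss
              have := hss (Finset.mem_Ioo.mpr ⟨hac, hcb⟩)
              exact (Finset.mem_Ioo.mp this).1.false
          exact ih _ hsub c b rfl hcb hbc
    exact H _ a0 b0 rfl hab0 hba0
  -- choice of the covering pair
  choose fa fb hcov hrev using key
  -- crossing of the pair (fa u, fb u) on edge (v,u)
  have hcross : ∀ u (h : G.Adj v u), Crosses P v u (fa u h) (fb u h) := by
    intro u h
    intro hiff
    have h1 : P v (fa u h) (fb u h) := (hcov u h).1
    have h2 : P u (fa u h) (fb u h) := hiff.mp h1
    exact (hlin u).toIrrefl.irrefl _ ((hlin u).toIsTrans.trans _ _ _ h2 (hrev u h))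
  -- injectivity of u ↦ fa u
  have hinj : ∀ u u' (h : G.Adj v u) (h' : G.Adj v u'), fa u h = fa u' h' → u = u' := by
    intro u u' h h' heq
    have hbb : fb u h = fb u' h' := by
      have c1 := hcov u h
      have c2 := hcov u' h'
      rw [heq] at c1
      rcases lt_trichotomy (fb u h) (fb u' h') with hx | hx | hx
      · exact absurd hx (by simpa using c2.2 c1.1)
      · exact hx
      · exact absurd hx (by simpa using c1.2 c2.1)
    have := hsc (fa u h) (fb u h) v u v u' h h' (hcross u h)
      (by rw [heq, hbb]; exact hcross u' h')
    rw [Sym2.eq_iff] at this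
    rcases this with ⟨-, h1⟩ | ⟨h1, h2⟩
    · exact h1
    · exact absurd h2.symm (G.ne_of_adj h)
  -- now count
  rcases (G.neighborFinset v).eq_empty_or_nonempty with he | ⟨u0, hu0⟩
  · simp [SimpleGraph.degree, he]
  · have hu0' : G.Adj v u0 := (SimpleGraph.mem_neighborFinset ..).mp hu0
    have hCne : Nonempty C := ⟨fa u0 hu0'⟩
    have huniv : (Finset.univ : Finset C).Nonempty := Finset.univ_nonempty
    set M := Finset.univ.max' huniv with hM
    have hmaps : ∀ u (h : G.Adj v u), fa u h ∈ Finset.univ.erase M := by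
      intro u h
      apply Finset.mem_erase.mpr
      refine ⟨?_, Finset.mem_univ _⟩
      intro hfa
      have hc := (hcov u h).1
      rw [hfa] at hc
      exact absurd (Finset.le_max' _ _ (Finset.mem_univ _)) (show M < fb u h from hc).not_ge
    have hcard := Finset.card_le_card_of_injOn
      (s := G.neighborFinset v) (t := Finset.univ.erase M)
      (fun u : V => if h : G.Adj v u then fa u h else Classical.arbitrary C)
      (fun u hu => by
        have h := (SimpleGraph.mem_neighborFinset ..).mp hu
        simp only [dif_pos h]
        exact hmaps u h)
      (fun u hu u' hu' heq => by
        have h := (SimpleGraph.mem_neighborFinset ..).mp hu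
        have h' := (SimpleGraph.mem_neighborFinset ..).mp hu'
        simp only [dif_pos h, dif_pos h'] at heq
        exact hinj u u' h h' heq)
    rw [SimpleGraph.degree]
    calc (G.neighborFinset v).card ≤ (Finset.univ.erase M).card := hcard
    _ = Fintype.card C - 1 := by
        rw [Finset.card_erase_of_mem (Finset.mem_univ _), Finset.card_univ]
end
end

section
/- Let P be a profile that is single crossing with respect to a tree T. Then for any three (not necessarily distinct) preferences p1, p2, p3 in P, the pairwise majority relation Maj(p1,p2,p3) is a linear order and belongs to P. -/
open SimpleGraph in
private lemma exists_firstInSet' {V : Type*} {G : SimpleGraph V} (S : Set V) :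
    ∀ {a b : V} (q : G.Walk a b), b ∈ S →
    ∃ (m : V) (r : G.Walk a m), m ∈ S ∧ ∀ v ∈ r.support, v ∈ S → v = m := by
  intro a b q
  induction q with
  | nil => exact fun hb => ⟨_, Walk.nil, hb, by simp⟩
  | @cons u v w h q ih =>
    intro hb
    by_cases hu : u ∈ S
    · exact ⟨u, Walk.nil, hu, by simp⟩
    · obtain ⟨m, r, hm, hr⟩ := ih hb
      refine ⟨m, Walk.cons h r, hm, ?_⟩
      intro z hz hzS
      rw [Walk.support_cons, List.mem_cons] at hz
      rcases hz with rfl | hz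
      · exact absurd hzS hu
      · exact hr z hz hzS

open SimpleGraph in
private lemma crosses_along' {V C : Type*} {G : SimpleGraph V} (P : V → C → C → Prop) (x y : C) :
    ∀ {a b : V} (q : G.Walk a b), ¬(P a x y ↔ P b x y) →
    ∃ u v, G.Adj u v ∧ s(u, v) ∈ q.edges ∧ ¬(P u x y ↔ P v x y) := by
  intro a b q
  induction q with
  | nil => intro h; exact absurd Iff.rfl h
  | @cons u v w h q ih =>
    intro hd
    by_cases huv : P u x y ↔ P v x y
    · have hvw : ¬(P v x y ↔ P w x y) := fun hh => hd (huv.trans hh)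
      obtain ⟨s, t, hadj, he, hc⟩ := ih hvw
      exact ⟨s, t, hadj, by rw [Walk.edges_cons]; exact List.mem_cons_of_mem _ he, hc⟩
    · exact ⟨u, v, h, by rw [Walk.edges_cons]; exact List.mem_cons_self, huv⟩

/-- for a profile single crossing with respect to a tree, the pairwise
majority relation of any three (not necessarily distinct) preferences of the profile is a
linear order and belongs to the profile. -/
theorem stmt_4 {V C : Type*} [Fintype V] {G : SimpleGraph V}
    (hT : G.IsTree) (P : V → C → C → Prop)
    (hlin : ∀ v, IsStrictTotalOrder C (P v))
    (hsc : SingleCrossingWrt G P) :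
    ∀ v₁ v₂ v₃ : V,
      IsStrictTotalOrder C (Maj3 (P v₁) (P v₂) (P v₃)) ∧
      ∃ w : V, P w = Maj3 (P v₁) (P v₂) (P v₃) := by
  intro v₁ v₂ v₃
  classical
  obtain ⟨p0⟩ := hT.isConnected.preconnected v₁ v₂
  obtain ⟨pw, hp⟩ := p0.toPath
  obtain ⟨q0⟩ := hT.isConnected.preconnected v₃ v₁
  obtain ⟨m, r, hmS, hr⟩ :=
    exists_firstInSet' {v | v ∈ pw.support} q0 (pw.start_mem_support)
  set t1 : G.Walk v₁ m := pw.takeUntil m hmS with ht1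
  set t2 : G.Walk m v₂ := pw.dropUntil m hmS with ht2
  have hdis12 : ∀ e ∈ t1.edges, e ∉ t2.edges := by
    have hsp := pw.take_spec hmS
    have hn : pw.edges.Nodup := hp.isTrail.edges_nodup
    rw [← hsp, SimpleGraph.Walk.edges_append] at hn
    exact List.disjoint_of_nodup_append hn
  have ht1s : ∀ z ∈ t1.support, z ∈ pw.support := fun z hz =>
    pw.support_takeUntil_subset hmS hz
  have ht2s : ∀ z ∈ t2.support, z ∈ pw.support := fun z hz =>
    pw.support_dropUntil_subset hmS hz
  have hdisr : ∀ {c d : V} (t : G.Walk c d), (∀ z ∈ t.support, z ∈ pw.support) →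
      ∀ e ∈ r.edges, e ∉ t.edges := by
    intro c d t hts e her het
    induction e using Sym2.ind with
    | _ u v =>
      have hu : u = m := hr u (r.fst_mem_support_of_mem_edges her)
        (hts u (t.fst_mem_support_of_mem_edges het))
      have hv : v = m := hr v (r.snd_mem_support_of_mem_edges her)
        (hts v (t.snd_mem_support_of_mem_edges het))
      exact (G.ne_of_adj (r.adj_of_mem_edges her)) (hu.trans hv.symm)
  have key : ∀ x y, (P m x y ↔ Maj3 (P v₁) (P v₂) (P v₃) x y) := by
    intro x y
    have pair : ∀ {c₁ c₂ : V} (w₁ : G.Walk c₁ m) (w₂ : G.Walk m c₂),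
        (∀ e ∈ w₁.edges, e ∉ w₂.edges) →
        ¬(P c₁ x y ↔ P m x y) → ¬(P m x y ↔ P c₂ x y) → False := by
      intro c₁ c₂ w₁ w₂ hdis h1 h2
      obtain ⟨u, v, hadj, he, hcr⟩ := crosses_along' P x y w₁ h1
      obtain ⟨u', v', hadj', he', hcr'⟩ := crosses_along' P x y w₂ h2
      have hee := hsc x y u v u' v' hadj hadj' hcr hcr'
      exact hdis _ he (hee ▸ he')
    have h12 : (P m x y ↔ P v₁ x y) ∨ (P m x y ↔ P v₂ x y) := by
      by_contra hc
      rw [not_or] at hc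
      exact pair t1 t2 hdis12 (fun h => hc.1 h.symm) hc.2
    have h13 : (P m x y ↔ P v₁ x y) ∨ (P m x y ↔ P v₃ x y) := by
      by_contra hc
      rw [not_or] at hc
      refine pair t1 r.reverse ?_ (fun h => hc.1 h.symm) hc.2
      intro e het hre
      rw [SimpleGraph.Walk.edges_reverse, List.mem_reverse] at hre
      exact hdisr t1 ht1s e hre het
    have h23 : (P m x y ↔ P v₂ x y) ∨ (P m x y ↔ P v₃ x y) := by
      by_contra hc
      rw [not_or] at hc
      exact pair r t2 (fun e her => hdisr t2 ht2s e her)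
        (fun h => hc.2 h.symm) hc.1
    clear pair hdis12 ht1s ht2s hdisr hr hsc hlin hT hp
    unfold Maj3
    tauto
  have heq : P m = Maj3 (P v₁) (P v₂) (P v₃) :=
    funext fun x => funext fun y => propext (key x y)
  refine ⟨?_, m, heq⟩
  rw [← heq]
  exact hlin m
end

section
/- For three nodes u1, u2, u3 of a tree T and their median node w (the unique node on all three pairwise paths), if a profile is single crossing with respect to T, then the preference at w equals the majority relation of the preferences at u1, u2, u3: for every pair of candidates x, y, the preference at w prefers x to y if and only if at least two of the preferences at u1, u2, u3 prefer x to y. -/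
lemma exists_cross_edge {V C : Type*} {G : SimpleGraph V} (P : V → C → C → Prop) {x y : C} :
    ∀ {a b : V} (q : G.Walk a b), ¬(P a x y ↔ P b x y) →
      ∃ c d, G.Adj c d ∧ Crosses P c d x y ∧ c ∈ q.support ∧ d ∈ q.support := by
  intro a b q
  induction q with
  | nil => exact fun h => absurd Iff.rfl h
  | @cons u v z h q ih =>
    intro hd
    by_cases hm : P u x y ↔ P v x y
    · obtain ⟨c, d, h1, h2, h3, h4⟩ := ih (fun hvz => hd (hm.trans hvz))
      exact ⟨c, d, h1, h2, List.mem_cons_of_mem _ h3, List.mem_cons_of_mem _ h4⟩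
    · exact ⟨u, v, h, hm, List.mem_cons_self,
        List.mem_cons_of_mem _ q.start_mem_support⟩

lemma no_two_cross {V C : Type*} {G : SimpleGraph V}
    (hT : G.IsTree) {P : V → C → C → Prop} {x y : C}
    (hsc : SingleCrossingWrt G P) {a b w : V}
    (hab : ∀ p : G.Walk a b, w ∈ p.support)
    (hda : Crosses P w a x y) (hdb : Crosses P w b x y) : False := by
  classical
  obtain ⟨p0⟩ := hT.isConnected.preconnected a b
  set p : G.Walk a b := (p0.toPath : G.Path a b).1 with hpdef
  have hp : p.IsPath := (p0.toPath : G.Path a b).2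
  have hw : w ∈ p.support := hab p
  set p₁ := p.takeUntil w hw with hp₁
  set p₂ := p.dropUntil w hw with hp₂
  obtain ⟨c₁, d₁, ha₁, hc₁, hm₁, hm₁'⟩ :=
    exists_cross_edge P p₁ (fun h => hda h.symm)
  obtain ⟨c₂, d₂, ha₂, hc₂, hm₂, hm₂'⟩ := exists_cross_edge P p₂ hdb
  have hse : s(c₁, d₁) = s(c₂, d₂) := hsc x y c₁ d₁ c₂ d₂ ha₁ ha₂ hc₁ hc₂
  have hsub : c₂ ∈ p₁.support ∧ d₂ ∈ p₁.support := by
    rcases Sym2.eq_iff.mp hse with ⟨h1, h2⟩ | ⟨h1, h2⟩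
    · exact ⟨h1 ▸ hm₁, h2 ▸ hm₁'⟩
    · exact ⟨h2 ▸ hm₁', h1 ▸ hm₁⟩
  have hsupp : p.support = p₁.support ++ p₂.support.tail := by
    rw [← SimpleGraph.Walk.support_append, SimpleGraph.Walk.take_spec]
  have hnd : p.support.Nodup := hp.support_nodup
  rw [hsupp] at hnd
  have hdisj := (List.nodup_append'.mp hnd).2.2
  have key : ∀ e ∈ p₂.support, e ∈ p₁.support → e = w := by
    intro e he he₁
    rw [SimpleGraph.Walk.support_eq_cons, List.mem_cons] at he
    rcases he with he | he
    · exact he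
    · exact absurd he (hdisj he₁)
  have hcw : c₂ = w := key c₂ hm₂ hsub.1
  have hdw : d₂ = w := key d₂ hm₂' hsub.2
  exact G.irrefl (hcw ▸ hdw ▸ ha₂)

/-- the preference at the median node `w` of three nodes `u₁, u₂, u₃` of a
single crossing tree equals the pairwise majority relation of the preferences at
`u₁, u₂, u₃`. (`w` lies on all three pairwise paths: in a tree, a node lies on the unique
path between `a` and `b` iff it lies on every walk from `a` to `b`.) -/
theorem stmt_5 {V C : Type*} [Fintype V] {G : SimpleGraph V}
    (hT : G.IsTree) (P : V → C → C → Prop)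
    (hlin : ∀ v, IsStrictTotalOrder C (P v))
    (hsc : SingleCrossingWrt G P)
    (u₁ u₂ u₃ w : V)
    (h12 : ∀ p : G.Walk u₁ u₂, w ∈ p.support)
    (h23 : ∀ p : G.Walk u₂ u₃, w ∈ p.support)
    (h31 : ∀ p : G.Walk u₃ u₁, w ∈ p.support) :
    ∀ x y : C, P w x y ↔ Maj3 (P u₁) (P u₂) (P u₃) x y := by
  intro x y
  have k12 : ¬(Crosses P w u₁ x y ∧ Crosses P w u₂ x y) :=
    fun ⟨h1, h2⟩ => no_two_cross hT hsc h12 h1 h2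
  have k23 : ¬(Crosses P w u₂ x y ∧ Crosses P w u₃ x y) :=
    fun ⟨h1, h2⟩ => no_two_cross hT hsc h23 h1 h2
  have k31 : ¬(Crosses P w u₃ x y ∧ Crosses P w u₁ x y) :=
    fun ⟨h1, h2⟩ => no_two_cross hT hsc h31 h1 h2
  simp only [Crosses] at k12 k23 k31
  unfold Maj3
  tauto
end

section
/- Let a profile of distinct preferences be single crossing with respect to a tree T, let u be an internal node of T of degree at least 3 with neighbors u1, u2, u3 lying in distinct components T1, T2, T3 of T − u, and let v1 ∈ T1, v2 ∈ T2, v3 ∈ T3 be any nodes. Then the preference at u equals the pairwise majority order of the preferences at v1, v2, and v3. -/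
open SimpleGraph

lemma cross_edge {V C : Type*} {G : SimpleGraph V} (P : V → C → C → Prop)
    {x y : C} {a b : V} (p : G.Walk a b) (h : ¬ (P a x y ↔ P b x y)) :
    ∃ c d, G.Adj c d ∧ c ∈ p.support ∧ d ∈ p.support ∧ Crosses P c d x y := by
  induction p with
  | nil => exact absurd Iff.rfl h
  | @cons a c b hadj q ih =>
    by_cases hc : P a x y ↔ P c x y
    · obtain ⟨e, f, he, hes, hfs, hcr⟩ := ih (fun hcb => h (hc.trans hcb))
      exact ⟨e, f, he, by simp [hes], by simp [hfs], hcr⟩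
    · exact ⟨a, c, hadj, by simp, by simp, hc⟩

lemma support_subset_compAvoid {V : Type*} {G : SimpleGraph V} {r a b : V}
    (p : G.Walk a b) (hr : r ∉ p.support) :
    ∀ w ∈ p.support, w ∈ CompAvoid G r a := by
  classical
  intro w hw
  exact ⟨p.takeUntil w hw, fun hc => hr (p.support_takeUntil_subset hw hc)⟩

lemma compAvoid_disjoint {V : Type*} {G : SimpleGraph V} (hT : G.IsTree)
    {u a b : V} (ha : G.Adj u a) (hb : G.Adj u b) (hab : a ≠ b) :
    ∀ w, w ∈ CompAvoid G u a → w ∈ CompAvoid G u b → False := by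
  classical
  rintro w ⟨p, hp⟩ ⟨q, hq⟩
  have hp' : u ∉ p.bypass.support := fun h => hp (p.support_bypass_subset h)
  have hq' : u ∉ q.bypass.support := fun h => hq (q.support_bypass_subset h)
  have hP1 : (Walk.cons ha p.bypass).IsPath :=
    (Walk.cons_isPath_iff _ _).2 ⟨p.bypass_isPath, hp'⟩
  have hP2 : (Walk.cons hb q.bypass).IsPath :=
    (Walk.cons_isPath_iff _ _).2 ⟨q.bypass_isPath, hq'⟩
  obtain ⟨_, hu⟩ := isTree_iff_existsUnique_path.mp hT
  obtain ⟨P0, -, hP0⟩ := hu u w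
  have heq : Walk.cons ha p.bypass = Walk.cons hb q.bypass :=
    (hP0 _ hP1).trans (hP0 _ hP2).symm
  have : a = b := by
    have h1 : (Walk.cons ha p.bypass).getVert 1 = a := (Walk.getVert_cons_succ p.bypass ha).trans p.bypass.getVert_zero
    have h2 : (Walk.cons hb q.bypass).getVert 1 = b := (Walk.getVert_cons_succ q.bypass hb).trans q.bypass.getVert_zero
    rw [← h1, ← h2, heq]
  exact hab this

lemma agree_pair {V C : Type*} {G : SimpleGraph V} (hT : G.IsTree)
    (P : V → C → C → Prop) (hsc : SingleCrossingWrt G P)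
    {u a b va vb : V} (ha : G.Adj u a) (hb : G.Adj u b) (hab : a ≠ b)
    (hva : va ∈ CompAvoid G u a) (hvb : vb ∈ CompAvoid G u b)
    (x y : C) : (P u x y ↔ P va x y) ∨ (P u x y ↔ P vb x y) := by
  by_contra hcon
  rw [not_or] at hcon
  obtain ⟨hna, hnb⟩ := hcon
  obtain ⟨pa, hpa⟩ := hva
  obtain ⟨pb, hpb⟩ := hvb
  obtain ⟨c, d, hcd, hcs, hds, hcr⟩ := cross_edge P (Walk.cons ha pa) hna
  obtain ⟨c', d', hcd', hcs', hds', hcr'⟩ := cross_edge P (Walk.cons hb pb) hnb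
  have heq := hsc x y c d c' d' hcd hcd' hcr hcr'
  have memA : ∀ w ∈ (Walk.cons ha pa).support, w = u ∨ w ∈ CompAvoid G u a := by
    intro w hw
    rw [Walk.support_cons, List.mem_cons] at hw
    exact hw.imp id (support_subset_compAvoid pa hpa w)
  have memB : ∀ w ∈ (Walk.cons hb pb).support, w = u ∨ w ∈ CompAvoid G u b := by
    intro w hw
    rw [Walk.support_cons, List.mem_cons] at hw
    exact hw.imp id (support_subset_compAvoid pb hpb w)
  have key : ∀ w, (w = u ∨ w ∈ CompAvoid G u a) → (w = u ∨ w ∈ CompAvoid G u b) → w = u := by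
    rintro w (rfl | hA) hB
    · rfl
    · rcases hB with rfl | hB
      · rfl
      · exact absurd (compAvoid_disjoint hT ha hb hab w hA hB) not_false
  rw [Sym2.eq_iff] at heq
  rcases heq with ⟨hcc, hdd⟩ | ⟨hcd'', hdc'⟩
  · subst hcc; subst hdd
    exact hcd.ne ((key c (memA c hcs) (memB c hcs')).trans
      (key d (memA d hds) (memB d hds')).symm)
  · subst hcd''; subst hdc'
    exact hcd.ne ((key c (memA c hcs) (memB c hds')).trans
      (key d (memA d hds) (memB d hcs')).symm)

/-- for a profile of distinct preferences single crossing with respect to a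
tree, if `u` has three distinct neighbors `u₁, u₂, u₃` and `vᵢ` lies in the component of
`uᵢ` in `T − u`, then the preference at `u` is the pairwise majority order of the
preferences at `v₁, v₂, v₃`. -/
theorem stmt_10 {V C : Type*} [Fintype V] {G : SimpleGraph V}
    (hT : G.IsTree) (P : V → C → C → Prop)
    (hlin : ∀ v, IsStrictTotalOrder C (P v))
    (hdist : Function.Injective P)
    (hsc : SingleCrossingWrt G P)
    (u u₁ u₂ u₃ v₁ v₂ v₃ : V)
    (h1 : G.Adj u u₁) (h2 : G.Adj u u₂) (h3 : G.Adj u u₃)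
    (h12 : u₁ ≠ u₂) (h13 : u₁ ≠ u₃) (h23 : u₂ ≠ u₃)
    (hv1 : v₁ ∈ CompAvoid G u u₁) (hv2 : v₂ ∈ CompAvoid G u u₂)
    (hv3 : v₃ ∈ CompAvoid G u u₃) :
    ∀ x y : C, P u x y ↔ Maj3 (P v₁) (P v₂) (P v₃) x y := by
  intro x y
  have hAB := agree_pair hT P hsc h1 h2 h12 hv1 hv2 x y
  have hAC := agree_pair hT P hsc h1 h3 h13 hv1 hv3 x y
  have hBC := agree_pair hT P hsc h2 h3 h23 hv2 hv3 x y
  unfold Maj3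
  tauto
end

section
/- Let a profile of distinct preferences over candidates c1 < c2 < ... < cm (in the order given by the preference at node v) be single crossing with respect to a tree T. Then for every i in [m−1], at most one neighbor u of v has a preference ranking c_{i+1} above c_i; moreover every neighbor u of v has some i with c_{i+1} preferred over c_i at u. -/
/-- let a profile of distinct preferences be single crossing with respect to
a tree, and let the preference at `v` be `c 0 ≻ c 1 ≻ ⋯ ≻ c (m-1)`. Then for each
`i < m - 1` at most one neighbor of `v` ranks `c (i+1)` above `c i`, and every neighbor of
`v` ranks `c (i+1)` above `c i` for some `i`. -/
theorem stmt_11 {V C : Type*} [Fintype V] {m : ℕ} {G : SimpleGraph V}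
    (hT : G.IsTree) (P : V → C → C → Prop)
    (hlin : ∀ v, IsStrictTotalOrder C (P v))
    (hdist : Function.Injective P)
    (hsc : SingleCrossingWrt G P)
    (v : V) (c : Fin m ≃ C)
    (hv : ∀ i j : Fin m, P v (c i) (c j) ↔ i < j) :
    (∀ i : ℕ, ∀ hi : i + 1 < m, ∀ u u' : V, G.Adj v u → G.Adj v u' →
        P u (c ⟨i + 1, hi⟩) (c ⟨i, Nat.lt_of_succ_lt hi⟩) →
        P u' (c ⟨i + 1, hi⟩) (c ⟨i, Nat.lt_of_succ_lt hi⟩) → u = u') ∧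
    ∀ u : V, G.Adj v u → ∃ i : ℕ, ∃ hi : i + 1 < m,
        P u (c ⟨i + 1, hi⟩) (c ⟨i, Nat.lt_of_succ_lt hi⟩) := by
  constructor
  · intro i hi u u' hu hu' hPu hPu'
    have hvxy : ¬ P v (c ⟨i + 1, hi⟩) (c ⟨i, Nat.lt_of_succ_lt hi⟩) := by
      simp only [hv, Fin.lt_def]; omega
    have h1 : Crosses P v u (c ⟨i + 1, hi⟩) (c ⟨i, Nat.lt_of_succ_lt hi⟩) := by
      intro h; exact hvxy (h.mpr hPu)
    have h2 : Crosses P v u' (c ⟨i + 1, hi⟩) (c ⟨i, Nat.lt_of_succ_lt hi⟩) := by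
      intro h; exact hvxy (h.mpr hPu')
    have hs := hsc _ _ v u v u' hu hu' h1 h2
    rw [Sym2.eq_iff] at hs
    rcases hs with ⟨_, h⟩ | ⟨ha, hb⟩
    · exact h
    · exact absurd hb.symm (G.ne_of_adj hu)
  · intro u hu
    by_contra hcon
    push_neg at hcon
    have step : ∀ i (hi : i + 1 < m),
        P u (c ⟨i, Nat.lt_of_succ_lt hi⟩) (c ⟨i + 1, hi⟩) := by
      intro i hi
      rcases (haveI := hlin u; trichotomous_of (P u) (c ⟨i, Nat.lt_of_succ_lt hi⟩) (c ⟨i + 1, hi⟩)) with h | h | h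
      · exact h
      · exact absurd (c.injective h) (by simp only [ne_eq, Fin.mk.injEq]; omega)
      · exact absurd h (hcon i hi)
    have chain : ∀ b (hb : b < m), ∀ a (ha : a < m), a < b →
        P u (c ⟨a, ha⟩) (c ⟨b, hb⟩) := by
      intro b
      induction b with
      | zero => intro hb a ha hab; omega
      | succ n ih =>
        intro hb a ha hab
        rcases Nat.lt_succ_iff_lt_or_eq.mp hab with h | h
        · exact (hlin u).trans _ _ _ (ih (Nat.lt_of_succ_lt hb) a ha h) (step n hb)
        · subst h; exact step a hb
    have chain' : ∀ i j : Fin m, i < j → P u (c i) (c j) := by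
      intro i j h
      exact chain j.val j.isLt i.val i.isLt h
    have heq : P u = P v := by
      funext x y
      apply propext
      rw [show x = c (c.symm x) from (c.apply_symm_apply x).symm,
          show y = c (c.symm y) from (c.apply_symm_apply y).symm, hv]
      constructor
      · intro h
        rcases lt_trichotomy (c.symm x) (c.symm y) with hl | hl | hl
        · exact hl
        · rw [hl] at h; exact absurd h ((hlin u).irrefl _)
        · exact absurd ((hlin u).trans _ _ _ h (chain' _ _ hl)) ((hlin u).irrefl _)
      · exact chain' _ _
    exact absurd (hdist heq) (G.ne_of_adj hu).symm
end

section
/- If a set Q of linear orders is single crossing with respect to a tree and P ⊆ Q, then every linear order in the triad majority closure of P is obtainable by finitely many applications of the ternary majority operation starting from P; consequently the triad majority closure of P is finite with size at most C(m,2)+1 when its elements are distinct linear orders over m candidates. -/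
/-- Linear orders obtainable from `P` by finitely many applications of the ternary
majority operation (applied whenever the pairwise majority relation is a linear order). -/
inductive TriadGen {C : Type*} (P : Set (C → C → Prop)) : (C → C → Prop) → Prop
  | base : ∀ p ∈ P, TriadGen P p
  | maj : ∀ p q r, TriadGen P p → TriadGen P q → TriadGen P r →
      IsStrictTotalOrder C (Maj3 p q r) → TriadGen P (Maj3 p q r)

section Aux

open SimpleGraph

variable {V C : Type} {G : SimpleGraph V} {f : V → C → C → Prop}

private lemma fun_ne_exists {p q : C → C → Prop} (h : p ≠ q) :
    ∃ x y, ¬ (p x y ↔ q x y) := by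
  by_contra hc
  push_neg at hc
  exact h (funext fun x => funext fun y => propext (hc x y))

private lemma dart_snd_mem_tail {u v : V} (w : G.Walk u v) {d : G.Dart} (hd : d ∈ w.darts) :
    d.snd ∈ w.support.tail := by
  induction w with
  | nil => simp at hd
  | cons h w ih =>
    rw [Walk.darts_cons, List.mem_cons] at hd
    rw [Walk.support_cons, List.tail_cons]
    rcases hd with rfl | hd
    · exact w.start_mem_support
    · exact List.mem_of_mem_tail (ih hd)

private lemma exists_cross_dart {a b : V} (w : G.Walk a b) (x y : C) :
    ¬ (f a x y ↔ f b x y) → ∃ d ∈ w.darts, ¬ (f d.fst x y ↔ f d.snd x y) := by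
  induction w with
  | nil => intro h; exact absurd Iff.rfl h
  | @cons a c b hadj w ih =>
    intro h
    by_cases h2 : f a x y ↔ f c x y
    · obtain ⟨d, hd, hc⟩ := ih fun hcb => h (h2.trans hcb)
      exact ⟨d, by simp [Walk.darts_cons, hd], hc⟩
    · exact ⟨⟨(a, c), hadj⟩, by simp [Walk.darts_cons], h2⟩

private lemma exists_last_cross_dart {a b : V} (w : G.Walk a b) :
    f a ≠ f b → ∃ d ∈ w.darts, f d.fst ≠ f d.snd ∧ f d.snd = f b := by
  induction w with
  | nil => intro h; exact absurd rfl h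
  | @cons a c b hadj w ih =>
    intro h
    by_cases h2 : f c = f b
    · exact ⟨⟨(a, c), hadj⟩, by simp [Walk.darts_cons], fun he => h (he.trans h2), h2⟩
    · obtain ⟨d, hd, hcr, he⟩ := ih h2
      exact ⟨d, by simp [Walk.darts_cons, hd], hcr, he⟩

private lemma constant_on_path [DecidableEq V] (hsc : SingleCrossingWrt G f) {a b : V}
    (p : G.Walk a b) (hp : p.IsPath) (x y : C) (hab : f a x y ↔ f b x y)
    {z : V} (hz : z ∈ p.support) : f z x y ↔ f a x y := by
  by_contra hzz
  have h1 : ¬ (f a x y ↔ f z x y) := fun h => hzz h.symm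
  have h2 : ¬ (f z x y ↔ f b x y) := fun h => hzz (h.trans hab.symm)
  obtain ⟨d1, hd1, hc1⟩ := exists_cross_dart (p.takeUntil z hz) x y h1
  obtain ⟨d2, hd2, hc2⟩ := exists_cross_dart (p.dropUntil z hz) x y h2
  have he : s(d1.fst, d1.snd) = s(d2.fst, d2.snd) :=
    hsc x y _ _ _ _ d1.adj d2.adj hc1 hc2
  have hnodup : ((p.takeUntil z hz).edges ++ (p.dropUntil z hz).edges).Nodup := by
    rw [← Walk.edges_append, Walk.take_spec]
    exact Walk.edges_nodup_of_support_nodup hp.support_nodup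
  have h1e : d1.edge ∈ (p.takeUntil z hz).edges := List.mem_map_of_mem hd1
  have h2e : d2.edge ∈ (p.dropUntil z hz).edges := List.mem_map_of_mem hd2
  have hee : d1.edge = d2.edge := he
  exact (List.disjoint_of_nodup_append hnodup) h1e (hee ▸ h2e)

private lemma exists_branch {u v : V} (p : G.Walk u v) (S : Set V) :
    (∃ z ∈ p.support, z ∈ S) →
      ∃ m, m ∈ S ∧ m ∈ p.support ∧ ∃ p₂ : G.Walk m v,
        (∀ z ∈ p₂.support, z ∈ S → z = m) ∧ (p.IsPath → p₂.IsPath) := by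
  induction p with
  | nil =>
    rintro ⟨z, hz, hzS⟩
    rw [Walk.support_nil, List.mem_singleton] at hz
    subst hz
    refine ⟨z, hzS, by simp, Walk.nil, ?_, fun h => h⟩
    intro z' hz' _
    rw [Walk.support_nil, List.mem_singleton] at hz'
    exact hz'
  | @cons a c b hadj w ih =>
    intro h
    by_cases hmeet : ∃ z ∈ w.support, z ∈ S
    · obtain ⟨m, hmS, hmp, p₂, hlast, hpath⟩ := ih hmeet
      exact ⟨m, hmS, by rw [Walk.support_cons]; exact List.mem_cons_of_mem _ hmp,
        p₂, hlast, fun hp => hpath hp.of_cons⟩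
    · obtain ⟨z, hz, hzS⟩ := h
      rw [Walk.support_cons, List.mem_cons] at hz
      have hza : z = a := by
        rcases hz with rfl | hz
        · rfl
        · exact absurd ⟨z, hz, hzS⟩ hmeet
      subst hza
      refine ⟨z, hzS, Walk.start_mem_support _, Walk.cons hadj w, ?_, fun hp => hp⟩
      intro z' hz' hz'S
      rw [Walk.support_cons, List.mem_cons] at hz'
      rcases hz' with rfl | hz'
      · rfl
      · exact absurd ⟨z', hz', hz'S⟩ hmeet

private lemma maj3_eq_sc [DecidableEq V] (hsc : SingleCrossingWrt G f)
    (hconn : G.Connected) (u v w : V) :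
    ∃ m : V, Maj3 (f u) (f v) (f w) = f m := by
  obtain ⟨w0⟩ := hconn.preconnected u v
  obtain ⟨w1⟩ := hconn.preconnected u w
  obtain ⟨p, hp⟩ := w0.toPath
  obtain ⟨q, hq⟩ := w1.toPath
  obtain ⟨m, hmq, hmp, p₂, hlast, hpath⟩ :=
    exists_branch p {z | z ∈ q.support} ⟨u, p.start_mem_support, q.start_mem_support⟩
  have hp₂ : p₂.IsPath := hpath hp
  have hmq' : m ∈ q.support := hmq
  have hq₂ : (q.dropUntil m hmq').IsPath := hq.dropUntil hmq'
  have hmtail : m ∉ (q.dropUntil m hmq').support.tail := by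
    have hnd := hq₂.support_nodup
    rw [(q.dropUntil m hmq').support_eq_cons] at hnd
    exact (List.nodup_cons.mp hnd).1
  have hrvw : (p₂.reverse.append (q.dropUntil m hmq')).IsPath := by
    rw [Walk.isPath_def, Walk.support_append]
    refine List.Nodup.append hp₂.reverse.support_nodup ?_ ?_
    · have hnd := hq₂.support_nodup
      rw [(q.dropUntil m hmq').support_eq_cons] at hnd
      exact (List.nodup_cons.mp hnd).2
    · intro z hz1 hz2
      rw [Walk.support_reverse, List.mem_reverse] at hz1
      have hzq : z ∈ q.support := q.support_dropUntil_subset hmq' (List.mem_of_mem_tail hz2)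
      have hzm : z = m := hlast z hz1 hzq
      subst hzm
      exact hmtail hz2
  have hm_mem : m ∈ (p₂.reverse.append (q.dropUntil m hmq')).support := by
    rw [Walk.mem_support_append_iff]
    left
    rw [Walk.support_reverse, List.mem_reverse]
    exact p₂.start_mem_support
  refine ⟨m, ?_⟩
  funext x y
  apply propext
  show (f u x y ∧ f v x y) ∨ (f u x y ∧ f w x y) ∨ (f v x y ∧ f w x y) ↔ f m x y
  by_cases h1 : f u x y ↔ f v x y
  · have hm := constant_on_path hsc p hp x y h1 hmp
    tauto
  · by_cases h2 : f u x y ↔ f w x y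
    · have hm := constant_on_path hsc q hq x y h2 hmq'
      tauto
    · have h3 : f v x y ↔ f w x y := by tauto
      have hm := constant_on_path hsc (p₂.reverse.append (q.dropUntil m hmq')) hrvw x y h3 hm_mem
      tauto

private lemma dart_fst_mem_takeUntil [DecidableEq V] {r v : V} {p : G.Walk r v}
    (hp : p.IsPath) {d : G.Dart} (hd : d ∈ p.darts)
    (hsnd : d.snd ∈ p.support) : d.fst ∈ (p.takeUntil d.snd hsnd).support := by
  have hsplit : p.darts = (p.takeUntil d.snd hsnd).darts ++ (p.dropUntil d.snd hsnd).darts := by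
    rw [← Walk.darts_append, Walk.take_spec]
  rw [hsplit, List.mem_append] at hd
  rcases hd with hd | hd
  · exact Walk.dart_fst_mem_support_of_mem_darts _ hd
  · exfalso
    have h1 : d.snd ∈ (p.dropUntil d.snd hsnd).support.tail := dart_snd_mem_tail _ hd
    have h2 := (hp.dropUntil hsnd).support_nodup
    rw [(p.dropUntil d.snd hsnd).support_eq_cons] at h2
    exact (List.nodup_cons.mp h2).1 h1

private lemma end_mem_tail {a b : V} (w : G.Walk a b) (hne : a ≠ b) : b ∈ w.support.tail := by
  cases w with
  | nil => exact absurd rfl hne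
  | cons h w =>
    rw [Walk.support_cons, List.tail_cons]
    exact w.end_mem_support

private lemma same_direction [DecidableEq V] (htree : G.IsTree) {r v v' : V}
    {p : G.Walk r v} {p' : G.Walk r v'} (hp : p.IsPath) (hp' : p'.IsPath)
    {d d' : G.Dart} (hd : d ∈ p.darts) (hd' : d' ∈ p'.darts)
    (he : d.edge = d'.edge) : d.snd = d'.snd := by
  have he' : s(d.fst, d.snd) = s(d'.fst, d'.snd) := he
  rw [Sym2.eq_iff] at he'
  rcases he' with ⟨h1, h2⟩ | ⟨h1, h2⟩
  · exact h2
  · exfalso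
    have hsnd : d.snd ∈ p.support := p.dart_snd_mem_support_of_mem_darts hd
    have hsnd' : d'.snd ∈ p'.support := p'.dart_snd_mem_support_of_mem_darts hd'
    have hc : d.fst ∈ (p.takeUntil d.snd hsnd).support := dart_fst_mem_takeUntil hp hd hsnd
    have hec : d'.fst ∈ (p'.takeUntil d'.snd hsnd').support :=
      dart_fst_mem_takeUntil hp' hd' hsnd'
    have hPe : (p.takeUntil d.snd hsnd).IsPath := hp.takeUntil hsnd
    have hPc : (p'.takeUntil d'.snd hsnd').IsPath := hp'.takeUntil hsnd'
    have hPc2path : (((p'.takeUntil d'.snd hsnd').copy rfl h1.symm) : G.Walk r d.fst).IsPath := by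
      rw [Walk.isPath_copy]
      exact hPc
    have heinPc2 : d.snd ∈ ((p'.takeUntil d'.snd hsnd').copy rfl h1.symm).support := by
      rw [Walk.support_copy]
      exact h2 ▸ hec
    have hQ : ((p.takeUntil d.snd hsnd).takeUntil d.fst hc).IsPath := hPe.takeUntil hc
    have heq : (p.takeUntil d.snd hsnd).takeUntil d.fst hc
        = (p'.takeUntil d'.snd hsnd').copy rfl h1.symm :=
      (htree.existsUnique_path r d.fst).unique hQ hPc2path
    have heQ : d.snd ∈ ((p.takeUntil d.snd hsnd).takeUntil d.fst hc).support := by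
      rw [heq]; exact heinPc2
    have hce : d.fst ≠ d.snd := d.adj.ne
    have heD : d.snd ∈ ((p.takeUntil d.snd hsnd).dropUntil d.fst hc).support.tail :=
      end_mem_tail _ hce
    have hnd : (((p.takeUntil d.snd hsnd).takeUntil d.fst hc).support ++
        ((p.takeUntil d.snd hsnd).dropUntil d.fst hc).support.tail).Nodup := by
      rw [← Walk.support_append, Walk.take_spec]
      exact hPe.support_nodup
    exact List.disjoint_of_nodup_append hnd heQ heD

private lemma sto_swap {r : C → C → Prop} (h : IsStrictTotalOrder C r) {x y : C}
    (hxy : x ≠ y) : r y x ↔ ¬ r x y := by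
  constructor
  · intro h1 h2
    exact h.irrefl x (h.trans _ _ _ h2 h1)
  · intro h1
    rcases (show r x y ∨ x = y ∨ r y x by
      by_contra hc; push_neg at hc; exact hc.2.1 (h.trichotomous x y hc.1 hc.2.2)) with h2 | h2 | h2
    · exact absurd h2 h1
    · exact absurd h2 hxy
    · exact h2

private lemma cross_ne (hsto : ∀ v, IsStrictTotalOrder C (f v)) {u v : V} {x y : C}
    (h : ¬ (f u x y ↔ f v x y)) : x ≠ y := by
  rintro rfl
  exact h (iff_of_false ((hsto u).irrefl x) ((hsto v).irrefl x))

private lemma cross_symm (hsto : ∀ v, IsStrictTotalOrder C (f v)) {u v : V} {x y : C}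
    (h : ¬ (f u x y ↔ f v x y)) : ¬ (f u y x ↔ f v y x) := by
  have hxy := cross_ne hsto h
  intro hcon
  rw [sto_swap (hsto u) hxy, sto_swap (hsto v) hxy] at hcon
  exact h (not_iff_not.mp hcon)

private lemma range_ncard_le [Finite V] [Fintype C] (hsc : SingleCrossingWrt G f)
    (htree : G.IsTree) (hsto : ∀ v, IsStrictTotalOrder C (f v)) :
    (Set.range f).ncard ≤ (Fintype.card C).choose 2 + 1 := by
  classical
  obtain ⟨r⟩ := htree.isConnected.nonempty
  by_cases hC : Nonempty C
  case neg =>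
    have hsub : Set.range f ⊆ {f r} := by
      rintro a ⟨v, rfl⟩
      have : f v = f r := funext fun x => (hC ⟨x⟩).elim
      simp [this]
    calc (Set.range f).ncard ≤ ({f r} : Set _).ncard :=
        Set.ncard_le_ncard hsub (Set.finite_singleton _)
      _ = 1 := Set.ncard_singleton _
      _ ≤ _ := Nat.succ_le_succ (Nat.zero_le _)
  obtain ⟨c0⟩ := hC
  have key : ∀ a ∈ Set.range f \ {f r}, ∃ e : Sym2 C, ¬ e.IsDiag ∧
      ∃ (v : V) (p : G.Walk r v) (x y : C) (d : G.Dart), p.IsPath ∧ d ∈ p.darts ∧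
        ¬ (f d.fst x y ↔ f d.snd x y) ∧ f d.snd = a ∧ e = s(x, y) := by
    rintro a ⟨⟨v, rfl⟩, hne⟩
    obtain ⟨w0⟩ := htree.isConnected.preconnected r v
    obtain ⟨p, hp⟩ := w0.toPath
    have hrv : f r ≠ f v := by
      intro h
      exact hne (by simp [← h])
    obtain ⟨d, hd, hcr, hend⟩ := exists_last_cross_dart p hrv
    obtain ⟨x, y, hxy⟩ := fun_ne_exists hcr
    refine ⟨s(x, y), ?_, v, p, x, y, d, hp, hd, hxy, hend, rfl⟩
    rw [Sym2.mk_isDiag_iff]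
    exact cross_ne hsto hxy
  choose F hF1 hF2 using key
  have hsfin : (Set.range f \ {f r}).Finite := (Set.finite_range f).diff
  let F' : (C → C → Prop) → Sym2 C :=
    fun a => if h : a ∈ Set.range f \ {f r} then F a h else s(c0, c0)
  have hmaps : ∀ a ∈ Set.range f \ {f r}, F' a ∈ {e : Sym2 C | ¬ e.IsDiag} := by
    intro a ha
    simp only [F', dif_pos ha]
    exact hF1 a ha
  have hinj : Set.InjOn F' (Set.range f \ {f r}) := by
    intro a ha a' ha' heq
    simp only [F', dif_pos ha, dif_pos ha'] at heq
    obtain ⟨v, p, x, y, d, hp, hd, hcr, hend, hedef⟩ := hF2 a ha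
    obtain ⟨v', p', x', y', d', hp', hd', hcr', hend', hedef'⟩ := hF2 a' ha'
    rw [hedef, hedef'] at heq
    have hcr'' : ¬ (f d'.fst x y ↔ f d'.snd x y) := by
      rcases Sym2.eq_iff.mp heq with ⟨rfl, rfl⟩ | ⟨rfl, rfl⟩
      · exact hcr'
      · exact cross_symm hsto hcr'
    have hedge : d.edge = d'.edge := hsc x y _ _ _ _ d.adj d'.adj hcr hcr''
    have hsnd : d.snd = d'.snd := same_direction htree hp hp' hd hd' hedge
    rw [← hend, ← hend', hsnd]
  have h1 : (Set.range f \ {f r}).ncard ≤ {e : Sym2 C | ¬ e.IsDiag}.ncard :=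
    Set.ncard_le_ncard_of_injOn F' hmaps hinj (Set.toFinite _)
  have h2 : {e : Sym2 C | ¬ e.IsDiag}.ncard = (Fintype.card C).choose 2 := by
    rw [← Nat.card_coe_set_eq, Nat.card_eq_fintype_card]
    exact (Fintype.card_congr (Equiv.refl _)).trans (Sym2.card_subtype_not_diag (α := C))
  have h3 : Set.range f ⊆ (Set.range f \ {f r}) ∪ {f r} := by
    intro a ha
    by_cases h : a = f r
    · right; simp [h]
    · left; exact ⟨ha, by simp [h]⟩
  calc (Set.range f).ncard ≤ ((Set.range f \ {f r}) ∪ {f r}).ncard :=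
      Set.ncard_le_ncard h3 (hsfin.union (Set.finite_singleton _))
    _ ≤ (Set.range f \ {f r}).ncard + ({f r} : Set _).ncard := Set.ncard_union_le _ _
    _ = (Set.range f \ {f r}).ncard + 1 := by rw [Set.ncard_singleton]
    _ ≤ (Fintype.card C).choose 2 + 1 := by
        have := h1.trans_eq h2
        omega

end Aux

/-- if a set `Q` of linear orders is single crossing with respect to a tree
and `P ⊆ Q`, then every member of the triad majority closure of `P` is obtainable from `P`
by finitely many applications of the ternary majority operation; consequently the closure
is finite of size at most `C(m,2) + 1`. -/
theorem stmt_19 {C : Type} [Fintype C] (P Q : Set (C → C → Prop))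
    (hQ : SCTreeSet Q) (hPQ : P ⊆ Q) :
    (∀ p ∈ triadClosure P, TriadGen P p) ∧
    (triadClosure P).Finite ∧
    (triadClosure P).ncard ≤ (Fintype.card C).choose 2 + 1 := by
  classical
  obtain ⟨V, instV, G, f, htree, hsto, hrange, hsc⟩ := hQ
  haveI : Fintype V := instV
  have hconn := htree.isConnected
  have hPsub : P ⊆ Set.range f := hrange ▸ hPQ
  have key : ∀ u v w : V, ∃ m : V, Maj3 (f u) (f v) (f w) = f m :=
    fun u v w => maj3_eq_sc hsc hconn u v w
  have gen_range : ∀ p, TriadGen P p → p ∈ Set.range f := by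
    intro p hp
    induction hp with
    | base p hp => exact hPsub hp
    | maj p q r hp hq hr hsto' ihp ihq ihr =>
      obtain ⟨u, hu⟩ := ihp
      obtain ⟨v, hv⟩ := ihq
      obtain ⟨w, hw⟩ := ihr
      obtain ⟨m, hm⟩ := key u v w
      rw [hu, hv, hw] at hm
      exact ⟨m, hm.symm⟩
  have hgen_set : {p : C → C → Prop | TriadGen P p} ∈
      {Q | P ⊆ Q ∧ (∀ p ∈ Q, IsStrictTotalOrder C p) ∧ TriadClosed Q} := by
    refine ⟨fun p hp => TriadGen.base p hp, ?_, ?_⟩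
    · intro p hp
      obtain ⟨v, hv⟩ := gen_range p hp
      rw [← hv]
      exact hsto v
    · intro p q r hp hq hr
      obtain ⟨u, hu⟩ := gen_range p hp
      obtain ⟨v, hv⟩ := gen_range q hq
      obtain ⟨w, hw⟩ := gen_range r hr
      obtain ⟨m, hm⟩ := key u v w
      have hmeq : Maj3 p q r = f m := by rw [hu, hv, hw] at hm; exact hm
      have hsto' : IsStrictTotalOrder C (Maj3 p q r) := by rw [hmeq]; exact hsto m
      exact ⟨hsto', TriadGen.maj p q r hp hq hr hsto'⟩
  have hsub : triadClosure P ⊆ {p | TriadGen P p} := Set.sInter_subset_of_mem hgen_set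
  have hsubrange : triadClosure P ⊆ Set.range f := fun p hp => gen_range p (hsub hp)
  refine ⟨fun p hp => hsub hp, (Set.finite_range f).subset hsubrange, ?_⟩
  calc (triadClosure P).ncard ≤ (Set.range f).ncard :=
      Set.ncard_le_ncard hsubrange (Set.finite_range f)
    _ ≤ _ := range_ncard_le hsc htree hsto
end
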